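/- Let t > 0 and ε ∈ {−1,+1}. The function F_{t,ε} : ℝ² → ℝ is differentiable everywhere, with partial derivatives ∂F/∂x = −2x(4(x² + y²) + 2t² − 1) and ∂F/∂y = −2y(4(x² + y²) + 2εt² − 1); consequently the derivative of F_{t,ε} vanishes at (x,y) if and only if (x,y) = (0,0), or ε = +1 and x² + y² = (1 − 2t²)/4, or ε = −1 and either (x = 0 and y² = (1 + 2t²)/4) or (y = 0 and x² = (1 − 2t²)/4). -/

import Mathlib

/-- The Karigiannis–Leung Chern–Simons type functional, evaluated on the
connections A = i(a₁η₁ + a₂η₂ + a₃η₃) on the trivial complex line bundle over a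
compact 3-Sasakian 7-manifold with the coclosed G₂-structure φ_{t,ε}
(normalized so that Vol(X, g^{ts}) = 1), with x = a₃ and y² = a₁² + a₂²:
F_{t,ε}(x,y) = −[(x² + y²)(2(x² + y²) − 1) + 2t²(x² + εy²)]. -/
def F (t ε : ℝ) : ℝ × ℝ → ℝ := fun p =>
  -((p.1 ^ 2 + p.2 ^ 2) * (2 * (p.1 ^ 2 + p.2 ^ 2) - 1) + 2 * t ^ 2 * (p.1 ^ 2 + ε * p.2 ^ 2))

/-- The explicit derivative of `F t ε` at `(x, y)`. -/
noncomputable def Fderiv (t ε x y : ℝ) : ℝ × ℝ →L[ℝ] ℝ :=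
  (-2 * x * (4 * (x ^ 2 + y ^ 2) + 2 * t ^ 2 - 1)) • ContinuousLinearMap.fst ℝ ℝ ℝ +
  (-2 * y * (4 * (x ^ 2 + y ^ 2) + 2 * ε * t ^ 2 - 1)) • ContinuousLinearMap.snd ℝ ℝ ℝ

lemma hasFDerivAt_F (t ε x y : ℝ) : HasFDerivAt (F t ε) (Fderiv t ε x y) (x, y) := by
  have hx : HasFDerivAt (fun p : ℝ × ℝ => p.1) (ContinuousLinearMap.fst ℝ ℝ ℝ) (x, y) :=
    hasFDerivAt_fst
  have hy : HasFDerivAt (fun p : ℝ × ℝ => p.2) (ContinuousLinearMap.snd ℝ ℝ ℝ) (x, y) :=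
    hasFDerivAt_snd
  have hx2 := hx.mul hx
  have hy2 := hy.mul hy
  have hq := hx2.add hy2
  have hA := hq.mul ((hq.const_mul (2:ℝ)).sub (hasFDerivAt_const (1:ℝ) ((x, y) : ℝ × ℝ)))
  have hB := (hx2.add (hy2.const_mul ε)).const_mul (2 * t ^ 2)
  have h := (hA.add hB).neg
  refine (h.congr_fderiv ?_).congr_of_eventuallyEq (Filter.Eventually.of_forall fun p => ?_)
  · ext <;> simp [Fderiv] <;> ring
  · simp [F]; ring

lemma Fderiv_apply (t ε x y a b : ℝ) :
    Fderiv t ε x y (a, b) =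
      a * (-2 * x * (4 * (x ^ 2 + y ^ 2) + 2 * t ^ 2 - 1)) +
      b * (-2 * y * (4 * (x ^ 2 + y ^ 2) + 2 * ε * t ^ 2 - 1)) := by
  simp [Fderiv]; ring

/-- F_{t,ε} is differentiable, with ∂F/∂x = −2x(4(x²+y²) + 2t² − 1) and
∂F/∂y = −2y(4(x²+y²) + 2εt² − 1); its derivative vanishes at (x,y) iff
(x,y) = (0,0), or ε = +1 and x² + y² = (1 − 2t²)/4, or ε = −1 and either
(x = 0 and y² = (1 + 2t²)/4) or (y = 0 and x² = (1 − 2t²)/4). -/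
theorem stmt_10 (t ε : ℝ) (ht : 0 < t) (hε : ε = 1 ∨ ε = -1) :
    Differentiable ℝ (F t ε) ∧
    (∀ x y : ℝ,
      fderiv ℝ (F t ε) (x, y) (1, 0) = -2 * x * (4 * (x ^ 2 + y ^ 2) + 2 * t ^ 2 - 1) ∧
      fderiv ℝ (F t ε) (x, y) (0, 1) = -2 * y * (4 * (x ^ 2 + y ^ 2) + 2 * ε * t ^ 2 - 1)) ∧
    (∀ x y : ℝ,
      fderiv ℝ (F t ε) (x, y) = 0 ↔
        (x = 0 ∧ y = 0) ∨
        (ε = 1 ∧ x ^ 2 + y ^ 2 = (1 - 2 * t ^ 2) / 4) ∨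
        (ε = -1 ∧ ((x = 0 ∧ y ^ 2 = (1 + 2 * t ^ 2) / 4) ∨
                   (y = 0 ∧ x ^ 2 = (1 - 2 * t ^ 2) / 4)))) := by
  have hfd : ∀ x y : ℝ, fderiv ℝ (F t ε) (x, y) = Fderiv t ε x y := fun x y =>
    (hasFDerivAt_F t ε x y).fderiv
  refine ⟨fun p => ((hasFDerivAt_F t ε p.1 p.2).differentiableAt), ?_, ?_⟩
  · intro x y
    rw [hfd]
    constructor <;> · rw [Fderiv_apply]; ring
  · intro x y
    rw [hfd]
    have hzero : Fderiv t ε x y = 0 ↔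
        -2 * x * (4 * (x ^ 2 + y ^ 2) + 2 * t ^ 2 - 1) = 0 ∧
        -2 * y * (4 * (x ^ 2 + y ^ 2) + 2 * ε * t ^ 2 - 1) = 0 := by
      constructor
      · intro h
        constructor
        · have := congrFun (congrArg DFunLike.coe h) (1, 0)
          rw [Fderiv_apply] at this; simpa using this
        · have := congrFun (congrArg DFunLike.coe h) (0, 1)
          rw [Fderiv_apply] at this; simpa using this
      · rintro ⟨h1, h2⟩
        apply ContinuousLinearMap.ext
        rintro ⟨a, b⟩
        rw [Fderiv_apply, h1, h2]
        simp
    rw [hzero]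
    have ht2 : (0:ℝ) < t ^ 2 := by positivity
    rcases hε with h1 | h1 <;> subst h1
    · constructor
      · rintro ⟨ha, hb⟩
        rcases mul_eq_zero.1 ha with hx0 | hs
        · rcases mul_eq_zero.1 hb with hy0 | hs'
          · left; constructor <;> nlinarith
          · right; left; constructor; · rfl
            nlinarith
        · right; left; constructor; · rfl
          nlinarith
      · rintro (⟨hx0, hy0⟩ | ⟨-, hs⟩ | ⟨habs, -⟩)
        · subst hx0; subst hy0; constructor <;> ring
        · constructor
          · linear_combination (-8 * x) * hs
          · linear_combination (-8 * y) * hs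
        · exact absurd habs (by norm_num)
    · constructor
      · rintro ⟨ha, hb⟩
        rcases mul_eq_zero.1 ha with hx0 | hs
        · rcases mul_eq_zero.1 hb with hy0 | hs'
          · left; constructor <;> nlinarith
          · have hx0' : x = 0 := by nlinarith
            right; right; refine ⟨rfl, Or.inl ⟨hx0', by nlinarith⟩⟩
        · rcases mul_eq_zero.1 hb with hy0 | hs'
          · have hy0' : y = 0 := by nlinarith
            right; right; refine ⟨rfl, Or.inr ⟨hy0', by nlinarith⟩⟩
          · exfalso; nlinarith
      · rintro (⟨hx0, hy0⟩ | ⟨habs, -⟩ | ⟨-, ⟨hx0, hy2⟩ | ⟨hy0, hx2⟩⟩)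
        · subst hx0; subst hy0; constructor <;> ring
        · exact absurd habs (by norm_num)
        · subst hx0; constructor; · ring
          linear_combination (-8 * y) * hy2
        · subst hy0; constructor
          · linear_combination (-8 * x) * hx2
          · ring
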